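/- In a transposed Poisson algebra A, the Lie bracket restricted to the transposed Poisson center A^A is identically zero: {b,b'} = 0 for all b,b' ∈ A^A. -/
import Mathlib


open TensorProduct

/-- A transposed Poisson algebra structure on a commutative unital `k`-algebra `A`:
a Lie bracket satisfying the transposed Leibniz rule `2a{b,c} = {ab,c} + {b,ac}`. -/
structure TPA (k A : Type*) [Field k] [CharZero k] [CommRing A] [Algebra k A] where
  br : A →ₗ[k] A →ₗ[k] A
  skew : ∀ a b, br a b = - br b a
  jacobi : ∀ a b c, br a (br b c) = br (br a b) c + br b (br a c)
  leibniz : ∀ a b c, 2 * a * br b c = br (a * b) c + br b (a * c)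

/-- The transposed Poisson center `A^A = {b | b{a,a'} = {ba,a'} for all a,a'}`. -/
def TPA.center {k A : Type*} [Field k] [CharZero k] [CommRing A] [Algebra k A]
    (P : TPA k A) : Set A := {b | ∀ a a', b * P.br a a' = P.br (b * a) a'}

theorem center_bracket_trivial {k A : Type*} [Field k] [CharZero k]
    [CommRing A] [Algebra k A] (P : TPA k A) (b b' : A)
    (hb : b ∈ P.center) (hb' : b' ∈ P.center) :
    P.br b b' = 0 := by
  have key : ∀ c ∈ P.center, ∀ a, P.br c a = P.br 1 (c * a) := by
    intro c hc a
    have h := P.leibniz c 1 a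
    have hc1 := hc 1 a
    rw [mul_one] at h hc1
    linear_combination h - 2 * hc1
  have h1 := key b hb b'
  have h2 := key b' hb' b
  rw [mul_comm] at h2
  have heq : P.br b b' = - P.br b b' := by
    linear_combination h1 - h2 + P.skew b' b
  have h2s : (2 : k) • P.br b b' = 0 := by
    rw [two_smul]; linear_combination heq
  exact (smul_eq_zero.mp h2s).resolve_left two_ne_zero
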